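/- Let G be a group and let f: F → F′ be a ℤG-module homomorphism between finitely generated free ℤG-modules with fixed bases. Then there exists a constant K such that for every finite-index normal subgroup H ≤ G, the induced map f*: Hom_{ℤH}(F′, ℤ) → Hom_{ℤH}(F, ℤ) has operator norm at most K with respect to the ℓ¹-norms induced by the bases and any choice of coset representatives. -/

import Mathlib

/-! Based finitely generated free `ℤG`-modules, modeled as `Fin k × G →₀ ℤ`
(with `ℤ`-basis the elements `g·eᵢ`), together with the `G`-action by left
translation.  `ℤG`-linear maps are `ℤ`-linear `G`-equivariant maps. -/

/-- The free `ℤG`-module of rank `k` with its standard basis. -/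
abbrev FreeMod (G : Type*) (k : ℕ) := Fin k × G →₀ ℤ

/-- The action of `g ∈ G` on the free module, permuting the `ℤ`-basis. -/
noncomputable def gsmul {G : Type*} [Group G] {k : ℕ} (g : G) :
    FreeMod G k →ₗ[ℤ] FreeMod G k :=
  Finsupp.lmapDomain ℤ ℤ (fun p => (p.1, g * p.2))

/-- `ℤG`-linearity of a `ℤ`-linear map between based free `ℤG`-modules. -/
def IsEquivariant {G : Type*} [Group G] {k m : ℕ}
    (f : FreeMod G k →ₗ[ℤ] FreeMod G m) : Prop :=
  ∀ (g : G) (x : FreeMod G k), f (gsmul g x) = gsmul g (f x)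

/-- `ℤH`-linearity of a functional into the trivial module `ℤ`. -/
def IsZHInvariant {G : Type*} [Group G] {k : ℕ} (H : Subgroup G)
    (φ : FreeMod G k →ₗ[ℤ] ℤ) : Prop :=
  ∀ h ∈ H, ∀ x : FreeMod G k, φ (gsmul h x) = φ x

/-- `r` is a choice of coset representatives for `H` in `G`. -/
def IsSection {G : Type*} [Group G] (H : Subgroup G) (r : G ⧸ H → G) : Prop :=
  ∀ c : G ⧸ H, (↑(r c) : G ⧸ H) = c

/-- The `ℓ¹`-norm on `Hom_{ℤH}(FreeMod G k, ℤ)` induced by the `ℤH`-basis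
`{r(c)·eᵢ}` coming from the `ℤG`-basis and the coset representatives `r`. -/
noncomputable def l1Norm {G : Type*} [Group G] {k : ℕ} (H : Subgroup G)
    (r : G ⧸ H → G) (φ : FreeMod G k →ₗ[ℤ] ℤ) : ℝ :=
  ∑ᶠ p : Fin k × (G ⧸ H), ((|φ (Finsupp.single (p.1, r p.2) 1)| : ℤ) : ℝ)

/-- A `ℤG`-linear map `f` between based finitely generated free
`ℤG`-modules induces, for every finite-index normal subgroup `H ≤ G`, a map
`f* : Hom_{ℤH}(F', ℤ) → Hom_{ℤH}(F, ℤ)` whose operator norm with respect to the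
induced `ℓ¹`-norms (for any choices of coset representatives) is bounded by a
constant `K` independent of `H`. -/
theorem uniform_operator_norm_bound
    {G : Type*} [Group G] {k k' : ℕ}
    (f : FreeMod G k →ₗ[ℤ] FreeMod G k') (hf : IsEquivariant f) :
    ∃ K : ℝ, 0 ≤ K ∧
      ∀ (H : Subgroup G), H.Normal → H.FiniteIndex →
      ∀ (r r' : G ⧸ H → G), IsSection H r → IsSection H r' →
      ∀ φ : FreeMod G k' →ₗ[ℤ] ℤ, IsZHInvariant H φ →
        l1Norm H r (φ ∘ₗ f) ≤ K * l1Norm H r' φ := by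
  classical
  set y : Fin k → FreeMod G k' := fun i => f (Finsupp.single (i, (1 : G)) 1) with hy
  refine ⟨∑ i : Fin k, ∑ p ∈ (y i).support, ((|y i p| : ℤ) : ℝ), ?_, ?_⟩
  · refine Finset.sum_nonneg fun i _ => Finset.sum_nonneg fun p _ => ?_
    exact_mod_cast abs_nonneg (y i p)
  intro H hN hFI r r' hr hr' φ hφ
  haveI := hN
  haveI : Finite (G ⧸ H) := (Nat.card_ne_zero.mp hFI.index_ne_zero).2
  haveI : Fintype (G ⧸ H) := Fintype.ofFinite _
  -- f on a basis vector in terms of `y`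
  have fact1 : ∀ (i : Fin k) (g : G),
      f (Finsupp.single (i, g) 1) =
        Finsupp.mapDomain (fun p : Fin k' × G => (p.1, g * p.2)) (y i) := by
    intro i g
    have h1 : gsmul (k := k) g (Finsupp.single (i, (1 : G)) 1)
        = Finsupp.single (i, g) 1 := by
      simp [gsmul, Finsupp.mapDomain_single]
    have h2 := hf g (Finsupp.single (i, (1 : G)) 1)
    rw [h1] at h2
    rw [h2]
    simp [gsmul]
    rfl
  -- evaluating a functional on a mapped finsupp
  have fact2 : ∀ (τ : Fin k' × G → Fin k' × G) (v : FreeMod G k'),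
      φ (Finsupp.mapDomain τ v)
        = ∑ p ∈ v.support, v p * φ (Finsupp.single (τ p) 1) := by
    intro τ v
    rw [Finsupp.mapDomain, map_finsuppSum, Finsupp.sum]
    refine Finset.sum_congr rfl fun p _ => ?_
    have h3 : Finsupp.single (τ p) (v p) = (v p) • Finsupp.single (τ p) (1 : ℤ) := by
      rw [Finsupp.smul_single', mul_one]
    rw [h3, map_smul, smul_eq_mul]
  -- H-invariance lets us move group elements to the chosen representatives
  have fact3 : ∀ (j : Fin k') (g : G),
      φ (Finsupp.single (j, g) 1) = φ (Finsupp.single (j, r' (↑g)) 1) := by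
    intro j g
    have hg : ((r' (↑g : G ⧸ H) : G) : G ⧸ H) = (↑g : G ⧸ H) := hr' _
    have hmem : (r' (↑g : G ⧸ H))⁻¹ * g ∈ H := (QuotientGroup.eq).mp hg
    have hmem2 : g * (r' (↑g : G ⧸ H))⁻¹ ∈ H := by
      have := hN.conj_mem _ hmem (r' (↑g : G ⧸ H))
      simpa [mul_assoc] using this
    have h4 := hφ _ hmem2 (Finsupp.single (j, r' (↑g : G ⧸ H)) 1)
    have h5 : gsmul (k := k') (g * (r' (↑g : G ⧸ H))⁻¹)
        (Finsupp.single (j, r' (↑g : G ⧸ H)) 1) = Finsupp.single (j, g) 1 := by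
      simp [gsmul, Finsupp.mapDomain_single, mul_assoc]
    rw [h5] at h4
    exact h4
  have hAnn : ∀ q : Fin k' × (G ⧸ H),
      (0 : ℝ) ≤ ((|φ (Finsupp.single (q.1, r' q.2) 1)| : ℤ) : ℝ) := fun q => by
    exact_mod_cast abs_nonneg _
  have hAeq : l1Norm H r' φ
      = ∑ q : Fin k' × (G ⧸ H), ((|φ (Finsupp.single (q.1, r' q.2) 1)| : ℤ) : ℝ) := by
    rw [l1Norm, finsum_eq_sum_of_fintype]
  have hA0 : 0 ≤ l1Norm H r' φ := by
    rw [hAeq]; exact Finset.sum_nonneg fun q _ => hAnn q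
  -- innermost sum bound
  have inner_le : ∀ j : Fin k',
      ∑ c : G ⧸ H, ((|φ (Finsupp.single (j, r' c) 1)| : ℤ) : ℝ) ≤ l1Norm H r' φ := by
    intro j
    rw [hAeq, Fintype.sum_prod_type]
    exact Finset.single_le_sum
      (f := fun j' : Fin k' =>
        ∑ c : G ⧸ H, ((|φ (Finsupp.single (j', r' c) 1)| : ℤ) : ℝ))
      (fun j' _ => Finset.sum_nonneg fun c _ => hAnn (j', c)) (Finset.mem_univ j)
  calc l1Norm H r (φ ∘ₗ f)
      = ∑ q : Fin k × (G ⧸ H),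
          ((|φ (f (Finsupp.single (q.1, r q.2) 1))| : ℤ) : ℝ) := by
        rw [l1Norm, finsum_eq_sum_of_fintype]; rfl
    _ = ∑ i : Fin k, ∑ c : G ⧸ H,
          ((|φ (f (Finsupp.single (i, r c) 1))| : ℤ) : ℝ) := by
        rw [Fintype.sum_prod_type]
    _ ≤ ∑ i : Fin k, ∑ c : G ⧸ H, ∑ p ∈ (y i).support,
          ((|y i p| : ℤ) : ℝ) *
            ((|φ (Finsupp.single (p.1, r' (c * (↑p.2 : G ⧸ H))) 1)| : ℤ) : ℝ) := by
        refine Finset.sum_le_sum fun i _ => Finset.sum_le_sum fun c _ => ?_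
        have he : φ (f (Finsupp.single (i, r c) 1))
            = ∑ p ∈ (y i).support,
                y i p * φ (Finsupp.single (p.1, r' (c * (↑p.2 : G ⧸ H))) 1) := by
          rw [fact1, fact2]
          refine Finset.sum_congr rfl fun p _ => ?_
          rw [fact3]
          congr 2
          rw [QuotientGroup.mk_mul, hr c]
        rw [he]
        push_cast
        calc |∑ p ∈ (y i).support,
              ((y i p : ℝ) * (φ (Finsupp.single (p.1, r' (c * (↑p.2 : G ⧸ H))) 1) : ℝ))|
            ≤ ∑ p ∈ (y i).support,
              |(y i p : ℝ) * (φ (Finsupp.single (p.1, r' (c * (↑p.2 : G ⧸ H))) 1) : ℝ)| :=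
              Finset.abs_sum_le_sum_abs _ _
          _ = ∑ p ∈ (y i).support, |(y i p : ℝ)| *
              |(φ (Finsupp.single (p.1, r' (c * (↑p.2 : G ⧸ H))) 1) : ℝ)| := by
              exact Finset.sum_congr rfl fun p _ => abs_mul _ _
    _ = ∑ i : Fin k, ∑ p ∈ (y i).support, ((|y i p| : ℤ) : ℝ) *
          ∑ c : G ⧸ H,
            ((|φ (Finsupp.single (p.1, r' c) 1)| : ℤ) : ℝ) := by
        refine Finset.sum_congr rfl fun i _ => ?_
        rw [Finset.sum_comm]
        refine Finset.sum_congr rfl fun p _ => ?_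
        rw [Finset.mul_sum]
        refine Eq.symm ?_
        rw [← Equiv.sum_comp (Equiv.mulRight (↑p.2 : G ⧸ H))
          (fun c => ((|y i p| : ℤ) : ℝ) *
            ((|φ (Finsupp.single (p.1, r' c) 1)| : ℤ) : ℝ))]
        rfl
    _ ≤ ∑ i : Fin k, ∑ p ∈ (y i).support, ((|y i p| : ℤ) : ℝ) * l1Norm H r' φ := by
        refine Finset.sum_le_sum fun i _ => Finset.sum_le_sum fun p _ => ?_
        refine mul_le_mul_of_nonneg_left (inner_le p.1) ?_
        exact_mod_cast abs_nonneg (y i p)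
    _ = (∑ i : Fin k, ∑ p ∈ (y i).support, ((|y i p| : ℤ) : ℝ)) * l1Norm H r' φ := by
        rw [Finset.sum_mul]
        exact Finset.sum_congr rfl fun i _ => (Finset.sum_mul _ _ _).symm
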